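/- Let R be a nonempty subset of a finite set V, with |R| ≤ B. If C : V → {1,…,B} is chosen uniformly at random (each element's color independent and uniform), then with probability at least 1/e there exists a color c with |R ∩ C⁻¹(c)| = 1. -/

import Mathlib

open Finset

lemma color_coding_aux_pow (b k : ℕ) (hk : k ≤ b) :
    (1 : ℝ) / Real.exp 1 ≤ ((b : ℝ) / (b + 1)) ^ k := by
  have hb1 : (0 : ℝ) < (b : ℝ) + 1 := by positivity
  have hbase0 : (0 : ℝ) ≤ (b : ℝ) / (b + 1) := by positivity
  have hbase1 : (b : ℝ) / (b + 1) ≤ 1 := by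
    rw [div_le_one hb1]; linarith
  have hstep : ((b : ℝ) / (b + 1)) ^ b ≤ ((b : ℝ) / (b + 1)) ^ k :=
    pow_le_pow_of_le_one hbase0 hbase1 hk
  refine le_trans ?_ hstep
  rcases Nat.eq_zero_or_pos b with rfl | hb
  · simp only [pow_zero]
    rw [div_le_one (Real.exp_pos 1)]
    have := Real.add_one_le_exp (1 : ℝ)
    linarith
  · have hbpos : (0 : ℝ) < (b : ℝ) := by exact_mod_cast hb
    have h1 : ((b : ℝ) + 1) / b ≤ Real.exp (1 / b) := by
      have := Real.add_one_le_exp (1 / (b : ℝ))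
      rw [add_div, div_self (ne_of_gt hbpos)]
      linarith
    have h2 : (((b : ℝ) + 1) / b) ^ b ≤ Real.exp 1 := by
      calc (((b : ℝ) + 1) / b) ^ b ≤ (Real.exp (1 / b)) ^ b := by
            exact pow_le_pow_left₀ (by positivity) h1 b
        _ = Real.exp 1 := by
            rw [← Real.exp_nat_mul]
            congr 1
            field_simp
    have hprod : ((b : ℝ) / (b + 1)) ^ b * (((b : ℝ) + 1) / b) ^ b = 1 := by
      rw [← mul_pow, div_mul_div_comm, mul_comm ((b : ℝ)) _,
        div_self (by positivity), one_pow]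
    rw [div_le_iff₀ (Real.exp_pos 1)]
    calc (1 : ℝ) = ((b : ℝ) / (b + 1)) ^ b * (((b : ℝ) + 1) / b) ^ b := hprod.symm
      _ ≤ ((b : ℝ) / (b + 1)) ^ b * Real.exp 1 := by
          exact mul_le_mul_of_nonneg_left h2 (pow_nonneg hbase0 b)

theorem color_coding_isolation {V : Type} [Fintype V] [DecidableEq V] (B : ℕ)
    (R : Finset V) (hR : R.Nonempty) (hB : R.card ≤ B) :
    (1 : ℝ) / Real.exp 1 ≤
      (Nat.card {C : V → Fin B // ∃ c : Fin B,
          (R.filter (fun v => C v = c)).card = 1} : ℝ) / (B ^ Fintype.card V) := by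
  classical
  obtain ⟨v₀, hv₀⟩ := hR
  have hr1 : 1 ≤ R.card := Finset.card_pos.mpr ⟨v₀, hv₀⟩
  obtain ⟨b, rfl⟩ : ∃ b, B = b + 1 := ⟨B - 1, by omega⟩
  set n := Fintype.card V with hn
  set r := R.card with hr
  have hrn : r ≤ n := Finset.card_le_univ R
  -- the injection
  let F : Fin (b + 1) × ({w // w ∈ R.erase v₀} → Fin b) × ({v // v ∉ R} → Fin (b + 1)) →
      (V → Fin (b + 1)) := fun p v =>
    if hv : v = v₀ then p.1
    else if hw : v ∈ R.erase v₀ then p.1.succAbove (p.2.1 ⟨v, hw⟩)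
    else p.2.2 ⟨v, fun hvR => hw (Finset.mem_erase.mpr ⟨hv, hvR⟩)⟩
  have hFprop : ∀ p, ∃ c : Fin (b + 1),
      (R.filter (fun v => F p v = c)).card = 1 := by
    intro p
    refine ⟨p.1, ?_⟩
    have : R.filter (fun v => F p v = p.1) = {v₀} := by
      ext w
      simp only [Finset.mem_filter, Finset.mem_singleton]
      constructor
      · rintro ⟨hwR, hw⟩
        by_contra hne
        have hw' : w ∈ R.erase v₀ := Finset.mem_erase.mpr ⟨hne, hwR⟩
        simp only [F, dif_neg hne, dif_pos hw'] at hw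
        exact Fin.succAbove_ne _ _ hw
      · rintro rfl
        exact ⟨hv₀, by simp only [F, dif_pos rfl]⟩
    rw [this, Finset.card_singleton]
  let G : Fin (b + 1) × ({w // w ∈ R.erase v₀} → Fin b) × ({v // v ∉ R} → Fin (b + 1)) →
      {C : V → Fin (b + 1) // ∃ c : Fin (b + 1),
        (R.filter (fun v => C v = c)).card = 1} := fun p => ⟨F p, hFprop p⟩
  have hGinj : Function.Injective G := by
    rintro ⟨c, g, h⟩ ⟨c', g', h'⟩ hpq
    have hfun : ∀ v, F (c, g, h) v = F (c', g', h') v :=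
      fun v => congrFun (congrArg Subtype.val hpq) v
    have hc : c = c' := by
      have := hfun v₀
      simpa only [F, dif_pos rfl] using this
    subst hc
    have hg : g = g' := by
      funext w
      have hne : (w : V) ≠ v₀ := (Finset.mem_erase.mp w.2).1
      have := hfun w.1
      simp only [F, dif_neg hne, dif_pos w.2] at this
      exact Fin.succAbove_right_injective this
    subst hg
    have hh : h = h' := by
      funext v
      have hne : (v : V) ≠ v₀ := fun hv => v.2 (hv ▸ hv₀)
      have hnw : (v : V) ∉ R.erase v₀ := fun hw => v.2 (Finset.mem_of_mem_erase hw)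
      have := hfun v.1
      simp only [F, dif_neg hne, dif_neg hnw] at this
      exact this
    subst hh
    rfl
  have hcardD : Nat.card (Fin (b + 1) × ({w // w ∈ R.erase v₀} → Fin b) ×
      ({v // v ∉ R} → Fin (b + 1))) = (b + 1) * b ^ (r - 1) * (b + 1) ^ (n - r) := by
    have h1 : Fintype.card {w // w ∈ R.erase v₀} = r - 1 := by
      rw [Fintype.card_coe, Finset.card_erase_of_mem hv₀]
    have h2 : Fintype.card {v // v ∉ R} = n - r := by
      have := Fintype.card_subtype_compl (fun v => v ∈ R)
      rw [this, Fintype.card_coe]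
    rw [Nat.card_eq_fintype_card, Fintype.card_prod, Fintype.card_prod,
      Fintype.card_fun, Fintype.card_fun, h1, h2, Fintype.card_fin, Fintype.card_fin]
    ring
  have hcount : (b + 1) * b ^ (r - 1) * (b + 1) ^ (n - r) ≤
      Nat.card {C : V → Fin (b + 1) // ∃ c : Fin (b + 1),
        (R.filter (fun v => C v = c)).card = 1} := by
    rw [← hcardD]
    exact Nat.card_le_card_of_injective G hGinj
  have hb1 : (0 : ℝ) < ((b : ℝ) + 1) := by positivity
  have hkey : ((b + 1) * b ^ (r - 1) * (b + 1) ^ (n - r) : ℝ) / ((b : ℝ) + 1) ^ n =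
      ((b : ℝ) / (b + 1)) ^ (r - 1) := by
    have hnsplit : n = (r - 1) + 1 + (n - r) := by clear hcount hcardD hGinj G hFprop F; omega
    rw [hnsplit, pow_add, pow_add, pow_one, div_pow]
    rw [show r - 1 + 1 + (n - r) - r = n - r by clear hcount hcardD hGinj G hFprop F; omega]
    field_simp
  have hfinal : ((b : ℝ) / (b + 1)) ^ (r - 1) ≤
      (Nat.card {C : V → Fin (b + 1) // ∃ c : Fin (b + 1),
        (R.filter (fun v => C v = c)).card = 1} : ℝ) / ((b : ℝ) + 1) ^ n := by
    rw [← hkey]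
    apply div_le_div_of_nonneg_right _ (by positivity)
    · exact_mod_cast hcount
  refine le_trans (color_coding_aux_pow b (r - 1) (by clear hfinal hkey hcount hcardD hGinj G hFprop F; omega)) ?_
  refine le_trans hfinal ?_
  apply le_of_eq
  congr 1
  push_cast
  ring
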